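/- Let g be an integer and let (r_1,b_1), …, (r_k,b_k) be pairs of integers with r_j ≥ 2 and 1 ≤ b_j ≤ r_j - 1. Let G be the Gram matrix (with respect to the basis {B} ∪ {E_{j,i}}) of the symmetric bilinear form defined by: ⟨B,B⟩ = 2g-2; ⟨E_{j,i},E_{j,i}⟩ = -2; ⟨E_{j,i},E_{j,i+1}⟩ = 1 for 1 ≤ i ≤ r_j-2; ⟨B,E_{j,r_j-b_j}⟩ = 1; all other pairings of basis vectors 0. Then det G = (-1)^{Σ_j (r_j-1)} · (Π_{j=1}^{k} r_j) · (2g - 2 + Σ_{j=1}^{k} b_j(r_j - b_j)/r_j). -/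

import Mathlib

namespace QGD


noncomputable def ent (n i j : ℕ) : ℚ :=
  -((min i j : ℕ) : ℚ) * ((n : ℚ) + 1 - ((max i j : ℕ) : ℚ)) / ((n : ℚ) + 1)

lemma ent_zero_left (n j : ℕ) : ent n 0 j = 0 := by simp [ent]

lemma ent_top (n j : ℕ) (h : j ≤ n + 1) : ent n (n + 1) j = 0 := by
  have : max (n+1) j = n + 1 := max_eq_left h
  simp [ent, this]

lemma ent_recur (n i j : ℕ) (hi1 : 1 ≤ i) (hi : i ≤ n) (hj1 : 1 ≤ j) (hj : j ≤ n) :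
    -2 * ent n i j + ent n (i - 1) j + ent n (i + 1) j = if i = j then 1 else 0 := by
  have hn : ((n : ℚ) + 1) ≠ 0 := by positivity
  obtain ⟨i, rfl⟩ : ∃ i', i = i' + 1 := ⟨i - 1, by omega⟩
  rcases lt_trichotomy (i + 1) j with h | h | h
  · have h1 : min (i+1) j = i + 1 := by omega
    have h2 : max (i+1) j = j := by omega
    have h3 : min i j = i := by omega
    have h4 : max i j = j := by omega
    have h5 : min (i+2) j = i + 2 := by omega
    have h6 : max (i+2) j = j := by omega
    have hne : ¬ (i + 1 = j) := by omega
    simp only [ent, h1, h2, h3, h4, h5, h6, if_neg hne, Nat.add_sub_cancel]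
    push_cast; field_simp; ring
  · subst h
    have h1 : min (i+1) (i+1) = i + 1 := by omega
    have h3 : min i (i+1) = i := by omega
    have h4 : max i (i+1) = i+1 := by omega
    have h5 : min (i+2) (i+1) = i + 1 := by omega
    have h6 : max (i+2) (i+1) = i+2 := by omega
    simp only [ent, h1, h3, h4, h5, h6, max_self, if_pos rfl, Nat.add_sub_cancel]
    push_cast
    field_simp
    ring
  · have h1 : min (i+1) j = j := by omega
    have h2 : max (i+1) j = i + 1 := by omega
    have h3 : min i j = j := by omega
    have h4 : max i j = i := by omega
    have h5 : min (i+2) j = j := by omega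
    have h6 : max (i+2) j = i + 2 := by omega
    have hne : ¬ (i + 1 = j) := by omega
    simp only [ent, h1, h2, h3, h4, h5, h6, if_neg hne, Nat.add_sub_cancel]
    push_cast; field_simp; ring


/-- Chain matrix entries, at the level of naturals. -/
def cEnt (i t : ℕ) : ℚ := if i = t then -2 else if i + 1 = t ∨ t + 1 = i then 1 else 0

lemma cEnt_split (i t : ℕ) :
    cEnt i t = (if t = i then (-2:ℚ) else 0) + (if t = i + 1 then 1 else 0)
      + (if t + 1 = i then 1 else 0) := by
  unfold cEnt; split_ifs <;> first | omega | norm_num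

lemma sum_cEnt_ent (n i y : ℕ) (hi : i < n) (hy : y ≤ n + 1) :
    ∑ t ∈ Finset.range n, cEnt i t * ent n (t+1) y
      = -2 * ent n (i+1) y + ent n i y + ent n (i+2) y := by
  have e1 : ∑ t ∈ Finset.range n, (if t = i then (-2:ℚ) else 0) * ent n (t+1) y
      = -2 * ent n (i+1) y := by
    simp only [ite_mul, zero_mul]
    rw [Finset.sum_ite_eq']
    simp [Finset.mem_range.mpr hi]
  have e2 : ∑ t ∈ Finset.range n, (if t = i + 1 then (1:ℚ) else 0) * ent n (t+1) y
      = ent n (i+2) y := by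
    simp only [ite_mul, zero_mul, one_mul]
    rw [Finset.sum_ite_eq']
    by_cases h : i + 1 < n
    · simp [Finset.mem_range.mpr h]
    · have hn : i + 1 = n := by omega
      rw [if_neg (by simp [Finset.mem_range]; omega)]
      rw [show i + 2 = n + 1 by omega, ent_top n y hy]
  have e3 : ∑ t ∈ Finset.range n, (if t + 1 = i then (1:ℚ) else 0) * ent n (t+1) y
      = ent n i y := by
    rcases i with _ | i'
    · simp [ent_zero_left]
    · have : ∀ t, (t + 1 = i' + 1) = (t = i') := fun t => by simp
      simp only [this]
      simp only [ite_mul, zero_mul, one_mul]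
      rw [Finset.sum_ite_eq']
      simp [Finset.mem_range.mpr (by omega : i' < n)]
  calc ∑ t ∈ Finset.range n, cEnt i t * ent n (t+1) y
      = ∑ t ∈ Finset.range n, ((if t = i then (-2:ℚ) else 0) * ent n (t+1) y
          + (if t = i + 1 then (1:ℚ) else 0) * ent n (t+1) y
          + (if t + 1 = i then (1:ℚ) else 0) * ent n (t+1) y) := by
        refine Finset.sum_congr rfl fun t _ => ?_
        rw [cEnt_split]; ring
    _ = -2 * ent n (i+1) y + ent n (i+2) y + ent n i y := by
        rw [Finset.sum_add_distrib, Finset.sum_add_distrib, e1, e2, e3]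
    _ = -2 * ent n (i+1) y + ent n i y + ent n (i+2) y := by ring

def chain (n : ℕ) : Matrix (Fin n) (Fin n) ℚ :=
  Matrix.of fun i j => cEnt i j

noncomputable def chainInv (n : ℕ) : Matrix (Fin n) (Fin n) ℚ :=
  Matrix.of fun i j => ent n (i+1) (j+1)

lemma chain_mul_chainInv (n : ℕ) : chain n * chainInv n = 1 := by
  ext i j
  rw [Matrix.mul_apply]
  have h1 : (∑ t : Fin n, chain n i t * chainInv n t j)
      = ∑ t ∈ Finset.range n, cEnt i t * ent n (t+1) (j+1) :=
    Fin.sum_univ_eq_sum_range (fun t => cEnt i t * ent n (t+1) (j+1)) n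
  rw [h1, sum_cEnt_ent n i (j+1) i.2 (by omega : (j:ℕ)+1 ≤ n+1)]
  have h2 := ent_recur n (i+1) (j+1) (by omega) (by omega) (by omega)
    (by omega : (j:ℕ)+1 ≤ n)
  rw [Nat.add_sub_cancel] at h2
  rw [h2, Matrix.one_apply]
  congr 1
  simp [Fin.ext_iff]

/-- upper factor entries -/
noncomputable def uEnt (i j : ℕ) : ℚ :=
  if i = j then -((i:ℚ)+2)/((i:ℚ)+1) else if i + 1 = j then 1 else 0

noncomputable def lEnt (i j : ℕ) : ℚ :=
  if i = j then 1 else if j + 1 = i then -((j:ℚ)+1)/((j:ℚ)+2) else 0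

lemma lEnt_split (i t : ℕ) :
    lEnt i t = (if t = i then (1:ℚ) else 0)
      + (if t + 1 = i then -((t:ℚ)+1)/((t:ℚ)+2) else 0) := by
  unfold lEnt; split_ifs <;> first | omega | norm_num

lemma sum_lu (n i j : ℕ) (hi : i < n) (hj : j < n) :
    ∑ t ∈ Finset.range n, lEnt i t * uEnt t j = cEnt i j := by
  have e1 : ∑ t ∈ Finset.range n, (if t = i then (1:ℚ) else 0) * uEnt t j
      = uEnt i j := by
    simp only [ite_mul, zero_mul, one_mul]
    rw [Finset.sum_ite_eq']
    simp [Finset.mem_range.mpr hi]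
  rcases i with _ | i'
  · have e2 : ∑ t ∈ Finset.range n, (if t + 1 = 0 then -((t:ℚ)+1)/((t:ℚ)+2) else 0) * uEnt t j
        = 0 := by
      apply Finset.sum_eq_zero; intro t _; simp
    calc ∑ t ∈ Finset.range n, lEnt 0 t * uEnt t j
        = ∑ t ∈ Finset.range n, ((if t = 0 then (1:ℚ) else 0) * uEnt t j
            + (if t + 1 = 0 then -((t:ℚ)+1)/((t:ℚ)+2) else 0) * uEnt t j) := by
          refine Finset.sum_congr rfl fun t _ => ?_
          rw [lEnt_split]; ring
      _ = uEnt 0 j := by rw [Finset.sum_add_distrib, e1, e2, add_zero]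
      _ = cEnt 0 j := by
          unfold uEnt cEnt
          by_cases h0 : 0 = j
          · subst h0; norm_num
          by_cases h1 : 0 + 1 = j
          · rw [if_neg h0, if_pos h1, if_neg h0, if_pos (Or.inl h1)]
          · rw [if_neg h0, if_neg h1, if_neg h0, if_neg (by omega)]
  · have e2 : ∑ t ∈ Finset.range n, (if t + 1 = i' + 1 then -((t:ℚ)+1)/((t:ℚ)+2) else 0) * uEnt t j
        = (-((i':ℚ)+1)/((i':ℚ)+2)) * uEnt i' j := by
      have : ∀ t : ℕ, (t + 1 = i' + 1) = (t = i') := fun t => by simp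
      simp only [this, ite_mul, zero_mul]
      rw [Finset.sum_ite_eq']
      simp [Finset.mem_range.mpr (by omega : i' < n)]
    calc ∑ t ∈ Finset.range n, lEnt (i'+1) t * uEnt t j
        = ∑ t ∈ Finset.range n, ((if t = i' + 1 then (1:ℚ) else 0) * uEnt t j
            + (if t + 1 = i' + 1 then -((t:ℚ)+1)/((t:ℚ)+2) else 0) * uEnt t j) := by
          refine Finset.sum_congr rfl fun t _ => ?_
          rw [lEnt_split]; ring
      _ = uEnt (i'+1) j + (-((i':ℚ)+1)/((i':ℚ)+2)) * uEnt i' j := by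
          rw [Finset.sum_add_distrib, e1, e2]
      _ = cEnt (i'+1) j := by
          have hp1 : ((i':ℚ)+1) ≠ 0 := by positivity
          have hp2 : ((i':ℚ)+2) ≠ 0 := by positivity
          unfold uEnt cEnt
          split_ifs <;> first | omega | (push_cast; field_simp; ring) | norm_num

noncomputable def chainL (n : ℕ) : Matrix (Fin n) (Fin n) ℚ := Matrix.of fun i j => lEnt i j
noncomputable def chainU (n : ℕ) : Matrix (Fin n) (Fin n) ℚ := Matrix.of fun i j => uEnt i j

lemma chain_eq_LU (n : ℕ) : chain n = chainL n * chainU n := by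
  ext i j
  rw [Matrix.mul_apply]
  have h1 : (∑ t : Fin n, chainL n i t * chainU n t j)
      = ∑ t ∈ Finset.range n, lEnt i t * uEnt t j :=
    Fin.sum_univ_eq_sum_range (fun t => lEnt i t * uEnt t j) n
  rw [h1, sum_lu n i j i.2 j.2]
  rfl

lemma prod_tele (n : ℕ) :
    ∏ i ∈ Finset.range n, (-((i:ℚ)+2)/((i:ℚ)+1)) = (-1)^n * ((n:ℚ)+1) := by
  induction n with
  | zero => simp
  | succ m ih =>
      rw [Finset.prod_range_succ, ih]
      have : ((m:ℚ)+1) ≠ 0 := by positivity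
      push_cast
      field_simp
      ring

lemma det_chain (n : ℕ) : (chain n).det = (-1)^n * ((n:ℚ)+1) := by
  rw [chain_eq_LU, Matrix.det_mul]
  have hL : (chainL n).det = 1 := by
    rw [Matrix.det_of_lowerTriangular (chainL n)
      (by intro i j h; simp only [OrderDual.toDual_lt_toDual] at h
          show lEnt i j = 0
          unfold lEnt; split_ifs <;> first | rfl | omega
          )]
    apply Finset.prod_eq_one; intro i _
    show lEnt i i = 1
    simp [lEnt]
  have hU : (chainU n).det = (-1)^n * ((n:ℚ)+1) := by
    rw [Matrix.det_of_upperTriangular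
      (by intro i j h; simp only [id] at h
          show uEnt i j = 0
          unfold uEnt; split_ifs <;> first | rfl | omega
          )]
    have : ∀ i : Fin n, chainU n i i = -((i:ℚ)+2)/((i:ℚ)+1) := by
      intro i; show uEnt i i = _; simp [uEnt]
    rw [Finset.prod_congr rfl (fun i _ => this i),
      Fin.prod_univ_eq_prod_range (fun i => -((i:ℚ)+2)/((i:ℚ)+1)) n, prod_tele]
  rw [hL, hU, one_mul]

lemma det_blockDiagonal'Q {k : ℕ} {m : Fin k → ℕ}
    (d : ∀ j, Matrix (Fin (m j)) (Fin (m j)) ℚ) :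
    (Matrix.blockDiagonal' d).det = ∏ j, (d j).det := by
  rw [Matrix.BlockTriangular.det_fintype (Matrix.blockTriangular_blockDiagonal' d)]
  refine Finset.prod_congr rfl fun j _ => ?_
  let e : Fin (m j) ≃ {ik : Σ i, Fin (m i) // ik.1 = j} :=
    { toFun := fun x => ⟨⟨j, x⟩, rfl⟩
      invFun := fun p => Fin.cast (congrArg m p.2) p.1.2
      left_inv := fun x => rfl
      right_inv := by rintro ⟨⟨i, x⟩, rfl⟩; rfl }
  rw [← Matrix.det_submatrix_equiv_self e]
  congr 1
  ext x y
  show (Matrix.blockDiagonal' d) ⟨j, x⟩ ⟨j, y⟩ = d j x y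
  exact Matrix.blockDiagonal'_apply_eq d j x y


end QGD

open QGD

/-- Index type for the basis `{B} ∪ {E_{j,i} : 1 ≤ j ≤ k, 1 ≤ i ≤ r_j - 1}` of the
lattice of the quasistellar graph; `Sum.inl ()` is the central vertex `B`, and
`Sum.inr ⟨j, c⟩` is the curve `E_{j, c+1}`. -/
abbrev GraphIdx (k : ℕ) (r : Fin k → ℕ) := Unit ⊕ (Σ j : Fin k, Fin (r j - 1))

/-- The Gram entries of the symmetric bilinear form of the quasistellar graph
`Γ(g, Ɓ)`: `⟨B,B⟩ = 2g-2`, `⟨E_{j,i},E_{j,i}⟩ = -2`, consecutive curves of the same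
chain pair to `1`, `⟨B, E_{j, r_j - b_j}⟩ = 1`, and all other pairings vanish. -/
def gram (g : ℤ) (k : ℕ) (r b : Fin k → ℕ) :
    GraphIdx k r → GraphIdx k r → ℚ
  | Sum.inl _, Sum.inl _ => 2 * (g : ℚ) - 2
  | Sum.inl _, Sum.inr ⟨j, c⟩ => if (c : ℕ) + 1 = r j - b j then 1 else 0
  | Sum.inr ⟨j, c⟩, Sum.inl _ => if (c : ℕ) + 1 = r j - b j then 1 else 0
  | Sum.inr ⟨j, c⟩, Sum.inr ⟨j', c'⟩ =>
      if j = j' then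
        if (c : ℕ) = (c' : ℕ) then -2
        else if (c : ℕ) + 1 = (c' : ℕ) ∨ (c' : ℕ) + 1 = (c : ℕ) then 1 else 0
      else 0

/-- The determinant of the Gram matrix of the quasistellar graph
`Γ(g,Ɓ)` is `(-1)^{Σ_j (r_j-1)} · (Π_j r_j) · (2g - 2 + Σ_j b_j(r_j - b_j)/r_j)`. -/
theorem quasistellar_graph_discriminant (g : ℤ) (k : ℕ) (r b : Fin k → ℕ)
    (hr : ∀ j, 2 ≤ r j) (hb : ∀ j, 1 ≤ b j ∧ b j ≤ r j - 1) :
    Matrix.det (Matrix.of (gram g k r b))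
      = (-1 : ℚ) ^ (∑ j, (r j - 1)) * (∏ j, (r j : ℚ))
        * (2 * (g : ℚ) - 2 + ∑ j, (b j : ℚ) * ((r j : ℚ) - (b j : ℚ)) / (r j : ℚ)) := by
  classical
  set S := Σ j : Fin k, Fin (r j - 1) with hS
  set Dm : Matrix S S ℚ := Matrix.blockDiagonal' (fun j => chain (r j - 1)) with hDm
  set Dinv : Matrix S S ℚ := Matrix.blockDiagonal' (fun j => chainInv (r j - 1)) with hDinv
  set Bm : Matrix Unit S ℚ :=
    Matrix.of (fun _ s => if (s.2 : ℕ) + 1 = r s.1 - b s.1 then (1:ℚ) else 0) with hBm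
  set Am : Matrix Unit Unit ℚ := Matrix.of (fun _ _ => 2 * (g : ℚ) - 2) with hAm
  -- block decomposition
  have step0 : Matrix.of (gram g k r b) = Matrix.fromBlocks Am Bm Bm.transpose Dm := by
    ext i j
    rcases i with i | ⟨ji, ci⟩ <;> rcases j with j | ⟨jj, cj⟩
    · rfl
    · rfl
    · rfl
    · show gram g k r b (Sum.inr ⟨ji, ci⟩) (Sum.inr ⟨jj, cj⟩) = Dm ⟨ji, ci⟩ ⟨jj, cj⟩
      by_cases h : ji = jj
      · subst h
        rw [hDm, Matrix.blockDiagonal'_apply_eq]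
        show (if ji = ji then _ else 0) = _
        rw [if_pos rfl]
        rfl
      · rw [hDm, Matrix.blockDiagonal'_apply_ne _ _ _ h]
        show (if ji = jj then _ else (0:ℚ)) = 0
        rw [if_neg h]
  -- invertibility of D
  have step1 : Dm * Dinv = 1 := by
    rw [hDm, hDinv, ← Matrix.blockDiagonal'_mul]
    have : (fun j => chain (r j - 1) * chainInv (r j - 1))
        = fun j : Fin k => (1 : Matrix (Fin (r j - 1)) (Fin (r j - 1)) ℚ) :=
      funext fun j => chain_mul_chainInv _
    rw [this]
    exact Matrix.blockDiagonal'_one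
  haveI : Invertible Dm := invertibleOfRightInverse _ _ step1
  have hinv : ⅟Dm = Dinv := invOf_eq_right_inv step1
  -- determinant of D
  have detD : Dm.det = (-1 : ℚ) ^ (∑ j, (r j - 1)) * ∏ j, (r j : ℚ) := by
    rw [hDm, det_blockDiagonal'Q]
    have h1 : ∀ j : Fin k, (chain (r j - 1)).det = (-1 : ℚ) ^ (r j - 1) * (r j : ℚ) := by
      intro j
      rw [det_chain]
      have : ((r j - 1 : ℕ) : ℚ) + 1 = (r j : ℚ) := by
        have := hr j
        have : ((r j - 1 : ℕ) : ℚ) = (r j : ℚ) - 1 := by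
          rw [Nat.cast_sub (by omega)]; norm_num
        rw [this]; ring
      rw [this]
    rw [Finset.prod_congr rfl (fun j _ => h1 j), Finset.prod_mul_distrib,
      Finset.prod_pow_eq_pow_sum]
  -- the distinguished index in each chain
  have hσ : ∀ j : Fin k, r j - b j - 1 < r j - 1 := by
    intro j; have := hr j; have := (hb j).1; have := (hb j).2; omega
  set σ : Fin k → S := fun j => ⟨j, ⟨r j - b j - 1, hσ j⟩⟩ with hσdef
  have Bsum : ∀ F : S → ℚ, (∑ s : S, Bm () s * F s) = ∑ j, F (σ j) := by
    intro F
    rw [← Finset.univ_sigma_univ, Finset.sum_sigma]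
    refine Finset.sum_congr rfl fun j _ => ?_
    rw [Finset.sum_eq_single (⟨r j - b j - 1, hσ j⟩ : Fin (r j - 1))]
    · have : Bm () (⟨j, ⟨r j - b j - 1, hσ j⟩⟩ : S) = 1 := by
        show (if (r j - b j - 1) + 1 = r j - b j then (1:ℚ) else 0) = 1
        rw [if_pos (by have := hr j; have := (hb j).1; have := (hb j).2; omega)]
      rw [this, one_mul]
    · intro c _ hc
      have : Bm () (⟨j, c⟩ : S) = 0 := by
        show (if (c : ℕ) + 1 = r j - b j then (1:ℚ) else 0) = 0
        rw [if_neg]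
        intro hcontra
        exact hc (by apply Fin.ext; simp; omega)
      rw [this, zero_mul]
    · intro h; exact absurd (Finset.mem_univ _) h
  -- the Schur complement entry
  have key : (Bm * Dinv * Bm.transpose) () ()
      = -∑ j, (b j : ℚ) * ((r j : ℚ) - (b j : ℚ)) / (r j : ℚ) := by
    rw [Matrix.mul_apply]
    have e1 : ∀ t : S, (Bm * Dinv) () t * Bm.transpose t () = Bm () t * (∑ s : S, Bm () s * Dinv s t) := by
      intro t
      rw [Matrix.mul_apply, Matrix.transpose_apply]
      ring
    rw [Finset.sum_congr rfl (fun t _ => e1 t), Bsum (fun t => ∑ s : S, Bm () s * Dinv s t)]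
    have e2 : ∀ j : Fin k, (∑ s : S, Bm () s * Dinv s (σ j)) = Dinv (σ j) (σ j) := by
      intro j
      rw [Bsum (fun s => Dinv s (σ j))]
      rw [Finset.sum_eq_single j]
      · intro j' _ hj'
        exact Matrix.blockDiagonal'_apply_ne _ _ _ hj'
      · intro h; exact absurd (Finset.mem_univ _) h
    rw [Finset.sum_congr rfl (fun j _ => e2 j), ← Finset.sum_neg_distrib]
    refine Finset.sum_congr rfl fun j _ => ?_
    have hval : Dinv (σ j) (σ j) = ent (r j - 1) (r j - b j) (r j - b j) := by
      rw [hDinv]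
      show Matrix.blockDiagonal' _ (⟨j, _⟩ : S) (⟨j, _⟩ : S) = _
      rw [Matrix.blockDiagonal'_apply_eq]
      show ent (r j - 1) ((r j - b j - 1) + 1) ((r j - b j - 1) + 1) = _
      congr 1 <;> (have := hr j; have := (hb j).1; have := (hb j).2; omega)
    rw [hval]
    have h2 : (2:ℕ) ≤ r j := hr j
    have hb1 : 1 ≤ b j := (hb j).1
    have hb2 : b j ≤ r j - 1 := (hb j).2
    have hrq : ((r j : ℚ)) ≠ 0 := Nat.cast_ne_zero.mpr (by omega)
    have c1 : ((r j - 1 : ℕ) : ℚ) = (r j : ℚ) - 1 := by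
      rw [Nat.cast_sub (by omega)]; norm_num
    have c2 : ((r j - b j : ℕ) : ℚ) = (r j : ℚ) - (b j : ℚ) := by
      rw [Nat.cast_sub (by omega)]
    unfold QGD.ent
    rw [min_self, max_self, c1, c2]
    field_simp
    have hri : (r j : ℚ) * (r j : ℚ)⁻¹ = 1 := mul_inv_cancel₀ hrq
    linear_combination ((b j : ℚ) ^ 2 - (r j : ℚ) * (b j : ℚ)) * hri
  -- assemble
  rw [step0, Matrix.det_fromBlocks₂₂, hinv, detD, Matrix.det_unique]
  have : (Am - Bm * Dinv * Bm.transpose) default default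
      = (2 * (g : ℚ) - 2) - (Bm * Dinv * Bm.transpose) () () := by
    rw [Matrix.sub_apply]; rfl
  rw [this, key]
  ring
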